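/- Let F be twice differentiable with L₂-Lipschitz Hessian, and let Δ̃ be an approximate stationary point of the cubic model m(Δ) = ⟨g,Δ⟩ + (1/2)⟨Δ,HΔ⟩ + (M/6)‖Δ‖³ satisfying ‖∇m(Δ̃)‖ ≤ ε'. Then ‖∇F(x+Δ̃)‖ ≤ ((M+L₂+1)/2)‖Δ̃‖² + ‖∇F(x) − g‖ + (1/2)‖∇²F(x) − H‖² + ε'. -/

import Mathlib

set_option synthInstance.maxHeartbeats 400000
open RealInnerProductSpace Set

lemma taylor_grad {d : ℕ}
    (gradF : EuclideanSpace ℝ (Fin d) → EuclideanSpace ℝ (Fin d))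
    (hessF : EuclideanSpace ℝ (Fin d) → EuclideanSpace ℝ (Fin d) →L[ℝ] EuclideanSpace ℝ (Fin d))
    (L₂ : ℝ)
    (hhess : ∀ x, HasFDerivAt gradF (hessF x) x)
    (hlip : ∀ x y, ‖hessF x - hessF y‖ ≤ L₂ * ‖x - y‖)
    (x Δ : EuclideanSpace ℝ (Fin d)) :
    ‖gradF (x + Δ) - gradF x - hessF x Δ‖ ≤ L₂ / 2 * ‖Δ‖ ^ 2 := by
  set f : ℝ → EuclideanSpace ℝ (Fin d) :=
    fun t => gradF (x + t • Δ) - t • hessF x Δ - gradF x with hf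
  have hline : ∀ t : ℝ, HasDerivAt (fun s : ℝ => x + s • Δ) Δ t := fun t => by
    simpa using ((hasDerivAt_id t).smul_const Δ).const_add x
  have hder : ∀ t : ℝ, HasDerivAt f (hessF (x + t • Δ) Δ - hessF x Δ) t := by
    intro t
    have h1 : HasDerivAt (fun s : ℝ => gradF (x + s • Δ)) (hessF (x + t • Δ) Δ) t :=
      (hhess (x + t • Δ)).comp_hasDerivAt t (hline t)
    have h2 : HasDerivAt (fun s : ℝ => s • hessF x Δ) (hessF x Δ) t := by
      simpa using (hasDerivAt_id t).smul_const (hessF x Δ)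
    exact (h1.sub h2).sub_const (gradF x)
  have key : ∀ ⦃t⦄, t ∈ Icc (0:ℝ) 1 → ‖f t‖ ≤ L₂ * ‖Δ‖ ^ 2 * t ^ 2 / 2 := by
    refine image_norm_le_of_norm_deriv_right_le_deriv_boundary
      (f := f) (f' := fun t => hessF (x + t • Δ) Δ - hessF x Δ)
      (B := fun t => L₂ * ‖Δ‖ ^ 2 * t ^ 2 / 2) (B' := fun t => L₂ * ‖Δ‖ ^ 2 * t)
      (fun t _ => (hder t).continuousAt.continuousWithinAt)
      (fun t _ => (hder t).hasDerivWithinAt) ?_ ?_ ?_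
    · simp [hf]
    · intro t
      have : HasDerivAt (fun s : ℝ => L₂ * ‖Δ‖ ^ 2 * s ^ 2 / 2)
          (L₂ * ‖Δ‖ ^ 2 * (2 * t) / 2) t := by
        exact (((hasDerivAt_pow 2 t).const_mul (L₂ * ‖Δ‖ ^ 2)).div_const 2).congr_deriv (by ring)
      convert this using 1; ring
    · intro t ht
      have h1 : ‖hessF (x + t • Δ) Δ - hessF x Δ‖
          ≤ ‖hessF (x + t • Δ) - hessF x‖ * ‖Δ‖ := by
        have := (hessF (x + t • Δ) - hessF x).le_opNorm Δ
        simpa using this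
      have h2 : ‖hessF (x + t • Δ) - hessF x‖ ≤ L₂ * (t * ‖Δ‖) := by
        have := hlip (x + t • Δ) x
        simpa [norm_smul, abs_of_nonneg ht.1] using this
      calc ‖hessF (x + t • Δ) Δ - hessF x Δ‖ ≤ L₂ * (t * ‖Δ‖) * ‖Δ‖ :=
            h1.trans (by
              have hΔ : (0:ℝ) ≤ ‖Δ‖ := norm_nonneg _
              exact mul_le_mul_of_nonneg_right h2 hΔ)
        _ = L₂ * ‖Δ‖ ^ 2 * t := by ring
  have := key (right_mem_Icc.2 zero_le_one)
  have hf1 : f 1 = gradF (x + Δ) - gradF x - hessF x Δ := by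
    simp [hf]; abel
  rw [hf1] at this
  calc ‖gradF (x + Δ) - gradF x - hessF x Δ‖ ≤ L₂ * ‖Δ‖ ^ 2 * 1 ^ 2 / 2 := this
    _ = L₂ / 2 * ‖Δ‖ ^ 2 := by ring

theorem stmt_19 (d : ℕ)
    (F : EuclideanSpace ℝ (Fin d) → ℝ)
    (gradF : EuclideanSpace ℝ (Fin d) → EuclideanSpace ℝ (Fin d))
    (hessF : EuclideanSpace ℝ (Fin d) → EuclideanSpace ℝ (Fin d) →L[ℝ] EuclideanSpace ℝ (Fin d))
    (L₂ M : ℝ) (hL₂ : 0 ≤ L₂) (hM : 0 < M)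
    (hgrad : ∀ x, HasGradientAt F (gradF x) x)
    (hhess : ∀ x, HasFDerivAt gradF (hessF x) x)
    (hlip : ∀ x y, ‖hessF x - hessF y‖ ≤ L₂ * ‖x - y‖)
    (g : EuclideanSpace ℝ (Fin d))
    (H : EuclideanSpace ℝ (Fin d) →L[ℝ] EuclideanSpace ℝ (Fin d))
    (hsymm : ∀ u w, ⟪H u, w⟫ = ⟪u, H w⟫)
    (ε' : ℝ) (hε' : 0 ≤ ε')
    (Δ : EuclideanSpace ℝ (Fin d))
    (happrox : ‖g + H Δ + (M / 2) • (‖Δ‖ • Δ)‖ ≤ ε')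
    (x : EuclideanSpace ℝ (Fin d)) :
    ‖gradF (x + Δ)‖ ≤
      (M + L₂ + 1) / 2 * ‖Δ‖ ^ 2 + ‖gradF x - g‖ + 1 / 2 * ‖hessF x - H‖ ^ 2 + ε' := by
  have htay := taylor_grad gradF hessF L₂ hhess hlip x Δ
  have hdecomp : gradF (x + Δ) =
      (g + H Δ + (M / 2) • (‖Δ‖ • Δ)) + (gradF (x + Δ) - gradF x - hessF x Δ)
        + (gradF x - g) + ((hessF x - H) Δ) - (M / 2) • (‖Δ‖ • Δ) := by
    rw [ContinuousLinearMap.sub_apply]; abel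
  have hnorm : ‖gradF (x + Δ)‖ ≤ ‖g + H Δ + (M / 2) • (‖Δ‖ • Δ)‖
      + ‖gradF (x + Δ) - gradF x - hessF x Δ‖ + ‖gradF x - g‖
      + ‖(hessF x - H) Δ‖ + ‖(M / 2) • (‖Δ‖ • Δ)‖ := by
    calc ‖gradF (x + Δ)‖ = ‖(g + H Δ + (M / 2) • (‖Δ‖ • Δ))
          + (gradF (x + Δ) - gradF x - hessF x Δ) + (gradF x - g)
          + ((hessF x - H) Δ) - (M / 2) • (‖Δ‖ • Δ)‖ := by rw [← hdecomp]
      _ ≤ _ := by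
          refine (norm_sub_le _ _).trans ?_
          gcongr
          exact (norm_add_le _ _).trans (by gcongr; exact (norm_add_le _ _).trans (by gcongr; exact norm_add_le _ _))
  have hop : ‖(hessF x - H) Δ‖ ≤ ‖hessF x - H‖ * ‖Δ‖ :=
    (hessF x - H).le_opNorm Δ
  have hyoung : ‖hessF x - H‖ * ‖Δ‖ ≤ 1 / 2 * ‖hessF x - H‖ ^ 2 + 1 / 2 * ‖Δ‖ ^ 2 := by
    nlinarith [sq_nonneg (‖hessF x - H‖ - ‖Δ‖)]
  have hcub : ‖(M / 2) • (‖Δ‖ • Δ)‖ = M / 2 * ‖Δ‖ ^ 2 := by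
    rw [norm_smul, norm_smul, Real.norm_eq_abs, Real.norm_eq_abs,
      abs_of_pos (by linarith : (0:ℝ) < M / 2), abs_of_nonneg (norm_nonneg Δ)]
    ring
  rw [hcub] at hnorm
  nlinarith [norm_nonneg (gradF x - g)]
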